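/- Let B be an n×k real matrix, let ε, δ ∈ (0,1) with ε ≤ δ and δ < 1/2, and let μ > 0. Assume B satisfies the RIP over 𝓗 with constant ε and the R-RIP over 𝓗−𝓗 with parameter δ and precision μ. Let y̌ ∈ ℝ^k be nonzero, let ř be an ordered selection, let w ∈ ℝ^m, and let x̌ = S_ř B y̌ + w. Suppose (ŷ, r̂) is a global minimizer of (y, r) ↦ ‖S_r B y − x̌‖ over all y ∈ ℝ^k and all ordered selections r. Then d((ŷ,r̂),(y̌,ř)) ≤ χ·√m·‖y̌‖, where χ = max{ μ·√((1+ε)/(1−ε))·(1 + 2‖w‖/‖S_ř B y̌‖), 2‖w‖/(‖S_ř B y̌‖·√(1−2δ)) }. -/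

import Mathlib

/-- Apply the ordered-selection sampling: `(S_r B y) i = ⟨B_{r i}, y⟩`. -/
noncomputable def selApply {n k m : ℕ} (B : Matrix (Fin n) (Fin k) ℝ) (r : Fin m → Fin n)
    (y : EuclideanSpace ℝ (Fin k)) : EuclideanSpace ℝ (Fin m) :=
  WithLp.toLp 2 (fun i => ∑ j, B (r i) j * y j)

/-- Similarity count `c(r,r') = #{i : r i = r' i}`. -/
def simCount {n m : ℕ} (r r' : Fin m → Fin n) : ℕ :=
  (Finset.univ.filter (fun i => r i = r' i)).card

/-- Distance `d((y,r),(y',r')) = √(m‖y‖² + m‖y'‖² − 2 c(r,r') ⟨y,y'⟩)`. -/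
noncomputable def selDist {n k m : ℕ} (y y' : EuclideanSpace ℝ (Fin k))
    (r r' : Fin m → Fin n) : ℝ :=
  Real.sqrt ((m : ℝ) * ‖y‖ ^ 2 + (m : ℝ) * ‖y'‖ ^ 2
    - 2 * (simCount r r' : ℝ) * (inner ℝ y y' : ℝ))

/-- `B` satisfies the RIP over 𝓗 with constant `ε`. -/
def RIPoverH {n k m : ℕ} (B : Matrix (Fin n) (Fin k) ℝ) (ε : ℝ) : Prop :=
  ∀ (y : EuclideanSpace ℝ (Fin k)) (r : Fin m → Fin n), StrictMono r →
    (1 - ε) * m * ‖y‖ ^ 2 ≤ ‖selApply B r y‖ ^ 2 ∧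
    ‖selApply B r y‖ ^ 2 ≤ (1 + ε) * m * ‖y‖ ^ 2

/-- `B` satisfies the relaxed RIP over 𝓗−𝓗 with parameter `δ` and precision `μ`. -/
def RRIPoverHdiffH {n k m : ℕ} (B : Matrix (Fin n) (Fin k) ℝ) (δ μ : ℝ) : Prop :=
  ∀ (y y' : EuclideanSpace ℝ (Fin k)) (r r' : Fin m → Fin n),
    StrictMono r → StrictMono r' →
    selDist y y' r r' ≥ μ * max (Real.sqrt m * ‖y‖) (Real.sqrt m * ‖y'‖) →
    (1 - δ) * (selDist y y' r r') ^ 2 ≤ ‖selApply B r y - selApply B r' y'‖ ^ 2 ∧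
    ‖selApply B r y - selApply B r' y'‖ ^ 2 ≤ (1 + δ) * (selDist y y' r r') ^ 2


private lemma le_of_sq_le_sq'' (a b : ℝ) (ha : 0 ≤ a) (hb : 0 ≤ b) (h : a ^ 2 ≤ b ^ 2) :
    a ≤ b := by nlinarith


private lemma aux_far (dq Nq X W2 ε δ : ℝ) (hdq : 0 ≤ dq) (hX : 0 ≤ X)
    (hNq : Nq ≤ (1 + ε) * X) (hd2 : (1 - δ) * dq ≤ W2)
    (hεδ : ε ≤ δ) (hε0 : 0 < ε) (hδhalf : δ < 1 / 2) :
    dq * (Nq * (1 - 2 * δ)) ≤ W2 * X := by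
  have h1 : dq * (Nq * (1 - 2 * δ)) ≤ dq * ((1 + ε) * X * (1 - 2 * δ)) :=
    mul_le_mul_of_nonneg_left (mul_le_mul_of_nonneg_right hNq (by linarith)) hdq
  have h2 : dq * ((1 + ε) * X * (1 - 2 * δ)) ≤ dq * ((1 - δ) * X) := by
    apply mul_le_mul_of_nonneg_left _ hdq
    nlinarith [mul_nonneg hX (show (0:ℝ) ≤ δ - ε + 2 * ε * δ by nlinarith)]
  have h3 : dq * ((1 - δ) * X) ≤ W2 * X := by
    nlinarith [mul_le_mul_of_nonneg_right hd2 hX]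
  linarith

private lemma aux_near (a b N W sL sU : ℝ) (hN : 0 < N) (hW : 0 ≤ W)
    (h1 : sL * b ≤ N + 2 * W) (h2 : N ≤ sU * a) :
    b * (sL * N) ≤ sU * a * (N + 2 * W) := by
  nlinarith [mul_le_mul_of_nonneg_left h1 hN.le,
    mul_le_mul_of_nonneg_right h2 (show (0:ℝ) ≤ N + 2 * W by linarith)]

set_option maxHeartbeats 1000000 in
/-- Theorem 1: recovery guarantee for the global minimizer under RIP and R-RIP. -/
theorem recovery_guarantee {n k m : ℕ} (B : Matrix (Fin n) (Fin k) ℝ)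
    (ε δ μ : ℝ) (hε0 : 0 < ε) (hε1 : ε < 1) (hδ0 : 0 < δ) (hδ1 : δ < 1)
    (hεδ : ε ≤ δ) (hδhalf : δ < 1 / 2) (hμ : 0 < μ)
    (hRIP : RIPoverH (m := m) B ε) (hRRIP : RRIPoverHdiffH (m := m) B δ μ)
    (ychk : EuclideanSpace ℝ (Fin k)) (hychk : ychk ≠ 0)
    (rchk : Fin m → Fin n) (hrchk : StrictMono rchk)
    (w : EuclideanSpace ℝ (Fin m))
    (xchk : EuclideanSpace ℝ (Fin m)) (hxchk : xchk = selApply B rchk ychk + w)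
    (yhat : EuclideanSpace ℝ (Fin k)) (rhat : Fin m → Fin n) (hrhat : StrictMono rhat)
    (hmin : ∀ (y : EuclideanSpace ℝ (Fin k)) (r : Fin m → Fin n), StrictMono r →
      ‖selApply B rhat yhat - xchk‖ ≤ ‖selApply B r y - xchk‖) :
    selDist yhat ychk rhat rchk ≤
      max (μ * Real.sqrt ((1 + ε) / (1 - ε)) * (1 + 2 * ‖w‖ / ‖selApply B rchk ychk‖))
          (2 * ‖w‖ / (‖selApply B rchk ychk‖ * Real.sqrt (1 - 2 * δ)))
        * Real.sqrt m * ‖ychk‖ := by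
  rcases Nat.eq_zero_or_pos m with hm | hm
  · subst hm
    simp [selDist, simCount]
  · have hmpos : (0:ℝ) < m := by exact_mod_cast hm
    have hy0 : 0 < ‖ychk‖ := norm_pos_iff.mpr hychk
    obtain ⟨hN2l, hN2u⟩ := hRIP ychk rchk hrchk
    obtain ⟨hyh2l, _⟩ := hRIP yhat rhat hrhat
    set SY := selApply B rchk ychk with hSYdef
    set SA := selApply B rhat yhat with hSAdef
    set N := ‖SY‖ with hNdef
    set d := selDist yhat ychk rhat rchk with hddef
    have hd0 : 0 ≤ d := Real.sqrt_nonneg _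
    have hNsq : 0 < N ^ 2 :=
      lt_of_lt_of_le (mul_pos (mul_pos (by linarith) hmpos) (pow_pos hy0 2)) hN2l
    have hNpos : 0 < N :=
      lt_of_pow_lt_pow_left₀ 2 (norm_nonneg SY) (by simpa using hNsq)
    have hW : 0 ≤ ‖w‖ := norm_nonneg w
    -- sqrt abbreviations
    set M := Real.sqrt (m : ℝ) with hMdef
    have hM2 : M ^ 2 = (m : ℝ) := Real.sq_sqrt (le_of_lt hmpos)
    have hMpos : 0 < M := Real.sqrt_pos.mpr hmpos
    set sL := Real.sqrt (1 - ε) with hsLdef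
    have hsL2 : sL ^ 2 = 1 - ε := Real.sq_sqrt (by linarith)
    have hsLpos : 0 < sL := Real.sqrt_pos.mpr (by linarith)
    set sU := Real.sqrt (1 + ε) with hsUdef
    have hsU2 : sU ^ 2 = 1 + ε := Real.sq_sqrt (by linarith)
    have hsUpos : 0 < sU := Real.sqrt_pos.mpr (by linarith)
    set sD := Real.sqrt (1 - 2 * δ) with hsDdef
    have hsD2 : sD ^ 2 = 1 - 2 * δ := Real.sq_sqrt (by linarith)
    have hsDpos : 0 < sD := Real.sqrt_pos.mpr (by linarith)
    have hsqdiv : Real.sqrt ((1 + ε) / (1 - ε)) = sU / sL := Real.sqrt_div (by linarith) _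
    rw [hsqdiv]
    -- basic consequences of RIP
    have hNle : N ≤ sU * (M * ‖ychk‖) := by
      apply le_of_sq_le_sq'' _ _ (norm_nonneg SY) (by positivity)
      have : (sU * (M * ‖ychk‖)) ^ 2 = (1 + ε) * ↑m * ‖ychk‖ ^ 2 := by
        rw [mul_pow, mul_pow, hsU2, hM2]; ring
      rw [this]; exact hN2u
    have hbL : sL * (M * ‖yhat‖) ≤ ‖SA‖ := by
      apply le_of_sq_le_sq'' _ _ (by positivity) (norm_nonneg SA)
      have : (sL * (M * ‖yhat‖)) ^ 2 = (1 - ε) * ↑m * ‖yhat‖ ^ 2 := by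
        rw [mul_pow, mul_pow, hsL2, hM2]; ring
      rw [this]; exact hyh2l
    -- error bound
    have hxw : SY - xchk = -w := by rw [hxchk]; abel
    have hmin' : ‖SA - xchk‖ ≤ ‖w‖ := by
      have := hmin ychk rchk hrchk
      rw [← hSYdef, hxw, norm_neg] at this
      exact this
    have hxw2 : ‖xchk - SY‖ = ‖w‖ := by
      rw [← norm_neg, neg_sub, hxw, norm_neg]
    have he : ‖SA - SY‖ ≤ 2 * ‖w‖ := by
      calc ‖SA - SY‖ ≤ ‖SA - xchk‖ + ‖xchk - SY‖ :=
            norm_sub_le_norm_sub_add_norm_sub _ _ _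
        _ ≤ 2 * ‖w‖ := by rw [hxw2]; linarith
    by_cases hcase : d ≥ μ * max (Real.sqrt m * ‖yhat‖) (Real.sqrt m * ‖ychk‖)
    · -- far case: use R-RIP
      obtain ⟨hlow, _⟩ := hRRIP yhat ychk rhat rchk hrhat hrchk hcase
      rw [← hSAdef, ← hSYdef, ← hddef] at hlow
      have he2 : ‖SA - SY‖ ^ 2 ≤ (2 * ‖w‖) ^ 2 :=
        pow_le_pow_left₀ (norm_nonneg _) he 2
      have hd2 : (1 - δ) * d ^ 2 ≤ (2 * ‖w‖) ^ 2 := le_trans hlow he2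
      have hBt : d ≤ 2 * ‖w‖ / (N * sD) * M * ‖ychk‖ := by
        apply le_of_sq_le_sq'' _ _ hd0 (by positivity)
        have hrhs : (2 * ‖w‖ / (N * sD) * M * ‖ychk‖) ^ 2
            = (2 * ‖w‖) ^ 2 * (↑m * ‖ychk‖ ^ 2) / (N ^ 2 * (1 - 2 * δ)) := by
          rw [mul_pow, mul_pow, div_pow, mul_pow N sD, hsD2, hM2]
          ring
        rw [hrhs, le_div_iff₀ (mul_pos (pow_pos hNpos 2) (by linarith))]
        exact aux_far (d ^ 2) (N ^ 2) (↑m * ‖ychk‖ ^ 2) ((2 * ‖w‖) ^ 2) ε δ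
          (sq_nonneg d) (by positivity) (by linarith [hN2u]) hd2 hεδ hε0 hδhalf
      calc d ≤ 2 * ‖w‖ / (N * sD) * M * ‖ychk‖ := hBt
        _ ≤ max (μ * (sU / sL) * (1 + 2 * ‖w‖ / N)) (2 * ‖w‖ / (N * sD)) * M * ‖ychk‖ := by
            gcongr
            exact le_max_right _ _
    · -- near case
      have hcase' : d < μ * max (M * ‖yhat‖) (M * ‖ychk‖) := lt_of_not_ge hcase
      have hA1 : 1 ≤ sU / sL := (one_le_div hsLpos).mpr (Real.sqrt_le_sqrt (by linarith))
      have hA2 : (1:ℝ) ≤ 1 + 2 * ‖w‖ / N := by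
        have : (0:ℝ) ≤ 2 * ‖w‖ / N := by positivity
        linarith
      have hc : (1:ℝ) ≤ sU / sL * (1 + 2 * ‖w‖ / N) := by nlinarith
      have ha : M * ‖ychk‖ ≤ sU / sL * (1 + 2 * ‖w‖ / N) * (M * ‖ychk‖) :=
        le_mul_of_one_le_left (by positivity) hc
      have hb : M * ‖yhat‖ ≤ sU / sL * (1 + 2 * ‖w‖ / N) * (M * ‖ychk‖) := by
        have hkey : sL * (M * ‖yhat‖) ≤ N + 2 * ‖w‖ := by
          have hSyh : ‖SA‖ ≤ N + 2 * ‖w‖ := by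
            have h1 := norm_add_le (SA - SY) SY
            rw [sub_add_cancel] at h1
            calc ‖SA‖ ≤ ‖SA - SY‖ + N := h1
              _ ≤ N + 2 * ‖w‖ := by linarith
          linarith [hbL.trans hSyh]
        have hmulpos : (0:ℝ) < sL * N := by positivity
        apply le_of_mul_le_mul_right _ hmulpos
        have hcval : sU / sL * (1 + 2 * ‖w‖ / N) * (M * ‖ychk‖) * (sL * N)
            = sU * (M * ‖ychk‖) * (N + 2 * ‖w‖) := by
          field_simp
        rw [hcval]
        exact aux_near (M * ‖ychk‖) (M * ‖yhat‖) N ‖w‖ sL sU hNpos hW hkey hNle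
      have hmaxle : μ * max (M * ‖yhat‖) (M * ‖ychk‖)
          ≤ μ * (sU / sL) * (1 + 2 * ‖w‖ / N) * (M * ‖ychk‖) := by
        have := mul_le_mul_of_nonneg_left (max_le hb ha) (le_of_lt hμ)
        calc μ * max (M * ‖yhat‖) (M * ‖ychk‖)
            ≤ μ * (sU / sL * (1 + 2 * ‖w‖ / N) * (M * ‖ychk‖)) := this
          _ = μ * (sU / sL) * (1 + 2 * ‖w‖ / N) * (M * ‖ychk‖) := by ring
      calc d ≤ μ * max (M * ‖yhat‖) (M * ‖ychk‖) := le_of_lt hcase'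
        _ ≤ μ * (sU / sL) * (1 + 2 * ‖w‖ / N) * (M * ‖ychk‖) := hmaxle
        _ = μ * (sU / sL) * (1 + 2 * ‖w‖ / N) * M * ‖ychk‖ := by ring
        _ ≤ max (μ * (sU / sL) * (1 + 2 * ‖w‖ / N)) (2 * ‖w‖ / (N * sD)) * M * ‖ychk‖ := by
            gcongr
            exact le_max_left _ _
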